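/- arXiv:1112.3741 — 10 statements merged into one kernel-verified Lean document; each statement's English description precedes it below -/
import Mathlib

section
/- Fix λ > 0, C > 0 and ρ > 0, and consider the goodput-based medium access game. Then: (i) if ρ ≥ 1, p* = 0 is an SNE; (ii) if ρ ≤ exp(−λC), p* = 1 is an SNE; (iii) if exp(−λC) < ρ < 1, then p* = (−log ρ)/(λC) lies in (0,1) and is an SNE. -/
/-- In the goodput-based medium access game with utility
`U(p′,p) = p′(exp(−pλC) − ρ)`: (i) if `ρ ≥ 1` then `p* = 0` is an SNE;
(ii) if `ρ ≤ exp(−λC)` then `p* = 1` is an SNE; (iii) if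
`exp(−λC) < ρ < 1` then `p* = (−log ρ)/(λC) ∈ (0,1)` is an SNE. -/
theorem stmt_3 (lam C ρ : ℝ) (hlam : 0 < lam) (hC : 0 < C) (hρ : 0 < ρ) :
    (1 ≤ ρ → ∀ q ∈ Set.Icc (0:ℝ) 1,
      q * (Real.exp (-((0:ℝ) * lam * C)) - ρ) ≤
        0 * (Real.exp (-((0:ℝ) * lam * C)) - ρ)) ∧
    (ρ ≤ Real.exp (-(lam * C)) → ∀ q ∈ Set.Icc (0:ℝ) 1,
      q * (Real.exp (-((1:ℝ) * lam * C)) - ρ) ≤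
        1 * (Real.exp (-((1:ℝ) * lam * C)) - ρ)) ∧
    (Real.exp (-(lam * C)) < ρ → ρ < 1 →
      (-Real.log ρ / (lam * C)) ∈ Set.Ioo (0:ℝ) 1 ∧
      ∀ q ∈ Set.Icc (0:ℝ) 1,
        q * (Real.exp (-((-Real.log ρ / (lam * C)) * lam * C)) - ρ) ≤
          (-Real.log ρ / (lam * C)) *
            (Real.exp (-((-Real.log ρ / (lam * C)) * lam * C)) - ρ)) := by
  have hlc : 0 < lam * C := mul_pos hlam hC
  refine ⟨?_, ?_, ?_⟩
  · intro h1 q hq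
    simp only [zero_mul, neg_zero, Real.exp_zero]
    have : 1 - ρ ≤ 0 := by linarith
    nlinarith [hq.1, hq.2]
  · intro h1 q hq
    simp only [one_mul]
    have : 0 ≤ Real.exp (-(lam * C)) - ρ := by linarith
    nlinarith [hq.1, hq.2]
  · intro h1 h2
    have hlog : 0 < -Real.log ρ := by
      have := Real.log_neg hρ h2; linarith
    have hlt : -Real.log ρ < lam * C := by
      have := Real.log_lt_log (Real.exp_pos _) h1
      rw [Real.log_exp] at this; linarith
    have key : -Real.log ρ / (lam * C) * lam * C = -Real.log ρ := by
      field_simp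
    have heq : Real.exp (-(-Real.log ρ / (lam * C) * lam * C)) = ρ := by
      rw [key, neg_neg, Real.exp_log hρ]
    refine ⟨⟨div_pos hlog hlc, (div_lt_one hlc).mpr hlt⟩, ?_⟩
    intro q hq
    rw [heq]
    simp
end

section
/- Fix λ > 0 and C > 0. Define the equilibrium density of success E(ρ) for ρ > 0 by E(ρ) = 0 if ρ ≥ 1, E(ρ) = λ exp(−λC) if ρ ≤ exp(−λC), and E(ρ) = λ(−ρ log ρ)/(λC) if exp(−λC) < ρ < 1. Then the supremum of E(ρ) over ρ > 0 equals the global optimal density of success, namely 1/(eC) if λC > 1 and λ exp(−λC) if λC ≤ 1; moreover this supremum is attained at ρ* = 1/e when λC > 1 and at ρ* = exp(−λC) when λC ≤ 1. -/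
open Classical in
/-- The equilibrium density of success in the goodput-based game. -/
noncomputable def equilibriumDensityOfSuccess (lam C ρ : ℝ) : ℝ :=
  if 1 ≤ ρ then 0
  else if ρ ≤ Real.exp (-(lam * C)) then lam * Real.exp (-(lam * C))
  else lam * (-ρ * Real.log ρ) / (lam * C)

lemma key1 (y : ℝ) : y * Real.exp (-y) ≤ Real.exp (-1) := by
  have h := Real.add_one_le_exp (y - 1)
  have h2 : y * Real.exp (-y) ≤ Real.exp (y - 1) * Real.exp (-y) := by
    nlinarith [Real.exp_pos (-y)]
  calc y * Real.exp (-y) ≤ Real.exp (y - 1) * Real.exp (-y) := h2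
    _ = Real.exp (-1) := by rw [← Real.exp_add]; ring_nf

lemma key2 (t x : ℝ) (ht : 0 < t) (htx : t ≤ x) (hx1 : x ≤ 1) :
    t * Real.exp (-t) ≤ x * Real.exp (-x) := by
  have hx : 0 < x := lt_of_lt_of_le ht htx
  have hlog : Real.log (t / x) ≤ t / x - 1 := Real.log_le_sub_one_of_pos (by positivity)
  rw [Real.log_div (ne_of_gt ht) (ne_of_gt hx)] at hlog
  have hstep : t / x - 1 ≤ t - x := by
    rw [div_sub_one (ne_of_gt hx), div_le_iff₀ hx]
    nlinarith
  have h3 : Real.log t - t ≤ Real.log x - x := by linarith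
  have ht' : t * Real.exp (-t) = Real.exp (Real.log t - t) := by
    rw [sub_eq_add_neg, Real.exp_add, Real.exp_log ht]
  have hx' : x * Real.exp (-x) = Real.exp (Real.log x - x) := by
    rw [sub_eq_add_neg, Real.exp_add, Real.exp_log hx]
  rw [ht', hx']
  exact Real.exp_le_exp.mpr h3

/-- The supremum over `ρ > 0` of the equilibrium density of
success equals the global optimal density of success, namely `1/(eC)` if
`λC > 1` (attained at `ρ* = 1/e`) and `λ exp(−λC)` if `λC ≤ 1` (attained at
`ρ* = exp(−λC)`). -/
theorem stmt_5 (lam C : ℝ) (hlam : 0 < lam) (hC : 0 < C) :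
    (1 < lam * C →
      (∀ ρ > (0:ℝ), equilibriumDensityOfSuccess lam C ρ ≤ 1 / (Real.exp 1 * C)) ∧
      equilibriumDensityOfSuccess lam C (1 / Real.exp 1) = 1 / (Real.exp 1 * C)) ∧
    (lam * C ≤ 1 →
      (∀ ρ > (0:ℝ),
        equilibriumDensityOfSuccess lam C ρ ≤ lam * Real.exp (-(lam * C))) ∧
      equilibriumDensityOfSuccess lam C (Real.exp (-(lam * C))) =
        lam * Real.exp (-(lam * C))) := by
  have hlc : 0 < lam * C := mul_pos hlam hC
  have hexp1 : (0:ℝ) < Real.exp 1 := Real.exp_pos 1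
  have heneg : Real.exp (-1) = 1 / Real.exp 1 := by
    rw [Real.exp_neg]; ring
  constructor
  · intro h1
    constructor
    · intro ρ hρ
      unfold equilibriumDensityOfSuccess
      split_ifs with hge hle
      · positivity
      · -- lam * exp(-(λC)) ≤ 1/(eC)
        have hk := key1 (lam * C)
        rw [heneg, le_div_iff₀ hexp1] at hk
        rw [le_div_iff₀ (by positivity : (0:ℝ) < Real.exp 1 * C)]
        nlinarith [Real.exp_pos (-(lam * C))]
      · -- middle branch
        push_neg at hge hle
        set t := -Real.log ρ with htdef
        have hρexp : ρ = Real.exp (-t) := by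
          rw [htdef, neg_neg, Real.exp_log hρ]
        have hval : -ρ * Real.log ρ = t * Real.exp (-t) := by
          rw [hρexp, Real.log_exp]; ring
        have hk := key1 t
        rw [heneg, le_div_iff₀ hexp1] at hk
        rw [hval, div_le_div_iff₀ (by positivity) (by positivity)]
        nlinarith [hk, mul_pos hlam hC]
    · -- value at 1/e
      unfold equilibriumDensityOfSuccess
      have h1e : 1 / Real.exp 1 < 1 := by
        rw [div_lt_one hexp1]
        have := Real.add_one_le_exp 1; linarith
      have h2 : Real.exp (-(lam * C)) < 1 / Real.exp 1 := by
        rw [← heneg]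
        exact Real.exp_lt_exp.mpr (by linarith)
      rw [if_neg (by linarith), if_neg (by linarith)]
      have hlog : Real.log (1 / Real.exp 1) = -1 := by
        rw [one_div, Real.log_inv, Real.log_exp]
      rw [hlog]
      field_simp
  · intro h1
    constructor
    · intro ρ hρ
      unfold equilibriumDensityOfSuccess
      split_ifs with hge hle
      · positivity
      · exact le_rfl
      · push_neg at hge hle
        set t := -Real.log ρ with htdef
        have hρexp : ρ = Real.exp (-t) := by
          rw [htdef, neg_neg, Real.exp_log hρ]
        have hval : -ρ * Real.log ρ = t * Real.exp (-t) := by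
          rw [hρexp, Real.log_exp]; ring
        have ht0 : 0 < t := by
          have : Real.log ρ < 0 := Real.log_neg hρ hge
          linarith
        have htx : t ≤ lam * C := by
          have : Real.exp (-(lam * C)) < Real.exp (-t) := by rw [← hρexp]; exact hle
          have := Real.exp_lt_exp.mp this
          linarith
        have hk := key2 t (lam * C) ht0 htx h1
        rw [hval, div_le_iff₀ (by positivity)]
        nlinarith [mul_le_mul_of_nonneg_left hk hlam.le]
    · unfold equilibriumDensityOfSuccess
      have h2 : Real.exp (-(lam * C)) < 1 := by
        rw [← Real.exp_zero]
        exact Real.exp_lt_exp.mpr (by linarith)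
      rw [if_neg (by linarith), if_pos le_rfl]
end

section
/- Fix λ > 0, C̄ > 0 and ρ > 0 with eλC̄ > √ρ (e the base of the natural logarithm). Then p* = 1 is a symmetric Nash equilibrium of the delay-based medium access game, and it is the unique SNE. -/
private lemma ex_le (x : ℝ) : Real.exp 1 * x ≤ Real.exp x := by
  have h1 : x ≤ Real.exp (x - 1) := by
    have := Real.add_one_le_exp (x - 1); linarith
  calc Real.exp 1 * x ≤ Real.exp 1 * Real.exp (x - 1) :=
        mul_le_mul_of_nonneg_left h1 (Real.exp_pos 1).le
    _ = Real.exp x := by rw [← Real.exp_add]; ring_nf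

/-- Key bound: for `0 < p`, `ρ * p * p < exp (p * lam * (2*Cb))`. -/
private lemma key_bound (lam Cb ρ p : ℝ) (hlam : 0 < lam) (hCb : 0 < Cb) (hρ : 0 < ρ)
    (h : Real.sqrt ρ < Real.exp 1 * lam * Cb) (hp : 0 < p) (hp1 : p ≤ 1) :
    ρ * p * p < Real.exp (p * lam * (2 * Cb)) := by
  have h1 : Real.exp 1 * (p * lam * Cb) ≤ Real.exp (p * lam * Cb) := ex_le _
  have h2 : p * Real.sqrt ρ < Real.exp (p * lam * Cb) := by
    have := mul_lt_mul_of_pos_left h hp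
    nlinarith
  have hs : 0 ≤ p * Real.sqrt ρ := mul_nonneg hp.le (Real.sqrt_nonneg _)
  have h3 : (p * Real.sqrt ρ)^2 < (Real.exp (p * lam * Cb))^2 := by
    exact pow_lt_pow_left₀ h2 hs (by norm_num)
  have h4 : (Real.sqrt ρ)^2 = ρ := Real.sq_sqrt hρ.le
  have h5 : (Real.exp (p * lam * Cb))^2 = Real.exp (p * lam * (2 * Cb)) := by
    rw [sq, ← Real.exp_add]; ring_nf
  nlinarith

/-- In the delay-based medium access game with utility
`U(p′,p) = −exp(pλC)/p′ − ρp′` (where `C = 2C̄`), if `eλC̄ > √ρ` then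
`p* = 1` is a symmetric Nash equilibrium, and it is the unique SNE. -/
theorem stmt_7 (lam Cb ρ : ℝ) (hlam : 0 < lam) (hCb : 0 < Cb) (hρ : 0 < ρ)
    (h : Real.sqrt ρ < Real.exp 1 * lam * Cb) :
    (∀ q ∈ Set.Ioc (0:ℝ) 1,
      -Real.exp ((1:ℝ) * lam * (2 * Cb)) / q - ρ * q ≤
        -Real.exp ((1:ℝ) * lam * (2 * Cb)) / 1 - ρ * 1) ∧
    (∀ p ∈ Set.Ioc (0:ℝ) 1,
      (∀ q ∈ Set.Ioc (0:ℝ) 1,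
        -Real.exp (p * lam * (2 * Cb)) / q - ρ * q ≤
          -Real.exp (p * lam * (2 * Cb)) / p - ρ * p) → p = 1) := by
  constructor
  · intro q ⟨hq0, hq1⟩
    have hA := key_bound lam Cb ρ 1 hlam hCb hρ h one_pos le_rfl
    set A := Real.exp ((1:ℝ) * lam * (2 * Cb)) with hAdef
    have hA' : ρ < A := by nlinarith
    have hcq : A / q * q = A := div_mul_cancel₀ _ hq0.ne'
    rw [neg_div, neg_div, div_one]
    nlinarith [mul_nonneg (by linarith : (0:ℝ) ≤ 1 - q) (by nlinarith : (0:ℝ) ≤ A - ρ * q)]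
  · intro p ⟨hp0, hp1⟩ hmax
    by_contra hne
    have hp1' : p < 1 := lt_of_le_of_ne hp1 hne
    have hA := key_bound lam Cb ρ p hlam hCb hρ h hp0 hp1
    set A := Real.exp (p * lam * (2 * Cb)) with hAdef
    have hApos : 0 < A := Real.exp_pos _
    set B := A / (ρ * p) with hBdef
    have hρp : 0 < ρ * p := mul_pos hρ hp0
    have hpB : p < B := by
      rw [hBdef, lt_div_iff₀ hρp]; nlinarith
    set q := min 1 ((p + B) / 2) with hqdef
    have hq1 : q ≤ 1 := min_le_left _ _
    have hpq : p < q := lt_min hp1' (by linarith)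
    have hq0 : 0 < q := lt_trans hp0 hpq
    have hqB : q < B := by
      rcases le_total ((p + B) / 2) 1 with hc | hc
      · have : q = (p + B) / 2 := min_eq_right hc
        rw [this]; linarith
      · have : q = 1 := min_eq_left hc
        rw [this]; linarith
    have hle := hmax q ⟨hq0, hq1⟩
    have hcq : A / q * q = A := div_mul_cancel₀ _ hq0.ne'
    rw [neg_div, neg_div] at hle
    have h2 : A / p ≤ A / q + ρ * q - ρ * p := by linarith
    rw [div_le_iff₀ hp0] at h2
    -- from hle: -A*p - ρ*q*(q*p) ≤ -A*q - ρ*p*(p*q)  ⇒  A*(q-p) ≤ ρ*p*q*(q-p) ⇒ A ≤ ρ*p*q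
    have hqB' : ρ * p * q < A := by
      have := (lt_div_iff₀ hρp).mp hqB
      linarith [this]
    nlinarith [mul_le_mul_of_nonneg_right h2 hq0.le, hcq, hqB', sub_pos.mpr hpq,
      mul_pos hρp (sub_pos.mpr hpq)]
end

section
/- Fix λ > 0, C̄ > 0 and ρ > 0 with eλC̄ ≤ √ρ and λC̄ ≥ 1. Then there exists p ∈ (0, 1/(λC̄)] with p√ρ = exp(pλC̄), and any p ∈ (0,1] satisfying p√ρ = exp(pλC̄) is a symmetric Nash equilibrium of the delay-based medium access game. -/
/-- In the delay-based medium access game with utility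
`U(p′,p) = −exp(pλC)/p′ − ρp′` (where `C = 2C̄`), if `eλC̄ ≤ √ρ` and
`λC̄ ≥ 1`, then there exists `p ∈ (0, 1/(λC̄)]` with `p√ρ = exp(pλC̄)`,
and any `p ∈ (0,1]` satisfying `p√ρ = exp(pλC̄)` is a symmetric Nash
equilibrium. -/
theorem stmt_8 (lam Cb ρ : ℝ) (hlam : 0 < lam) (hCb : 0 < Cb) (hρ : 0 < ρ)
    (h1 : Real.exp 1 * lam * Cb ≤ Real.sqrt ρ) (h2 : 1 ≤ lam * Cb) :
    (∃ p ∈ Set.Ioc (0:ℝ) (1 / (lam * Cb)),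
      p * Real.sqrt ρ = Real.exp (p * lam * Cb)) ∧
    (∀ p ∈ Set.Ioc (0:ℝ) 1, p * Real.sqrt ρ = Real.exp (p * lam * Cb) →
      ∀ q ∈ Set.Ioc (0:ℝ) 1,
        -Real.exp (p * lam * (2 * Cb)) / q - ρ * q ≤
          -Real.exp (p * lam * (2 * Cb)) / p - ρ * p) := by
  have hlc : 0 < lam * Cb := mul_pos hlam hCb
  constructor
  · -- existence via IVT
    set f : ℝ → ℝ := fun p => p * Real.sqrt ρ - Real.exp (p * lam * Cb) with hf
    have hcont : ContinuousOn f (Set.Icc 0 (1 / (lam * Cb))) := by fun_prop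
    have h0 : f 0 = -1 := by simp [hf]
    have hone : (1 / (lam * Cb)) * lam * Cb = 1 := by field_simp
    have hb : 0 ≤ f (1 / (lam * Cb)) := by
      have hle : Real.exp 1 ≤ (1 / (lam * Cb)) * Real.sqrt ρ := by
        rw [div_mul_eq_mul_div, one_mul, le_div_iff₀ hlc]
        calc Real.exp 1 * (lam * Cb) = Real.exp 1 * lam * Cb := by ring
          _ ≤ Real.sqrt ρ := h1
      simp only [hf, hone]
      linarith
    have hiv := intermediate_value_Icc (by positivity : (0:ℝ) ≤ 1 / (lam * Cb)) hcont
    have hmem : (0:ℝ) ∈ Set.Icc (f 0) (f (1 / (lam * Cb))) := by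
      rw [h0]; exact ⟨by linarith, hb⟩
    obtain ⟨p, hp, hfp⟩ := hiv hmem
    have hpne : p ≠ 0 := by
      intro h; rw [h, h0] at hfp; norm_num at hfp
    refine ⟨p, ⟨lt_of_le_of_ne hp.1 (Ne.symm hpne), hp.2⟩, ?_⟩
    have : p * Real.sqrt ρ - Real.exp (p * lam * Cb) = 0 := hfp
    linarith
  · intro p hp hpe q hq
    have hp0 := hp.1
    have hq0 := hq.1
    have hA : Real.exp (p * lam * (2 * Cb)) = p ^ 2 * ρ := by
      have he : p * lam * (2 * Cb) = p * lam * Cb + p * lam * Cb := by ring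
      rw [he, Real.exp_add, ← hpe, mul_mul_mul_comm, Real.mul_self_sqrt hρ.le]
      ring
    rw [hA]
    have hd : 2 * p * ρ - ρ * q ≤ p ^ 2 * ρ / q := by
      rw [le_div_iff₀ hq0]
      nlinarith [sq_nonneg (p - q), hρ.le]
    have e1 : -(p ^ 2 * ρ) / p - ρ * p = -(2 * p * ρ) := by
      field_simp; ring
    have e2 : -(p ^ 2 * ρ) / q - ρ * q = -(p ^ 2 * ρ / q + ρ * q) := by ring
    rw [neg_div, neg_div] at *
    linarith [hd]
end

section
/- Fix λ > 0 and C̄ > 0 with λC̄ < 1. Then there exists ρ₀ ≥ (eλC̄)² such that: (i) for every ρ with (eλC̄)² ≤ ρ ≤ ρ₀, p* = 1 is a symmetric Nash equilibrium of the delay-based medium access game; and (ii) for every ρ ≥ ρ₀, the equation p√ρ = exp(pλC̄) has exactly one solution p ∈ (0,1], this solution satisfies p ≤ 1/(λC̄), and it is the unique symmetric Nash equilibrium. -/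
lemma gmono (a : ℝ) (ha : 0 < a) (ha1 : a < 1) :
    StrictMonoOn (fun x : ℝ => x * Real.exp (-(a*x))) (Set.Icc 0 1) := by
  apply strictMonoOn_of_deriv_pos (convex_Icc 0 1)
  · fun_prop
  · intro x hx
    rw [interior_Icc] at hx
    have h1 : HasDerivAt (fun x : ℝ => -(a*x)) (-a) x := by
      simpa using ((hasDerivAt_id x).const_mul (-a))
    have h2 := h1.exp
    have h3 := (hasDerivAt_id x).mul h2
    have h4 : HasDerivAt (fun x : ℝ => x * Real.exp (-(a*x)))
        (Real.exp (-(a*x)) * (1 - a*x)) x := by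
      refine h3.congr_deriv ?_; simp [id]; ring
    rw [h4.deriv]
    have : a * x < 1 := by nlinarith [hx.1, hx.2]
    have := Real.exp_pos (-(a*x))
    nlinarith

lemma sign_contra1 (ρ p' q E' : ℝ) (h1 : q < p') (h2 : E' < ρ * q * p')
    (hkey : 0 ≤ (q - p') * (ρ * q * p' - E')) : False := by
  nlinarith [mul_pos (sub_pos.mpr h1) (sub_pos.mpr h2)]

lemma sign_contra2 (ρ p' q E' : ℝ) (h1 : p' < q) (h2 : ρ * q * p' < E')
    (hkey : 0 ≤ (q - p') * (ρ * q * p' - E')) : False := by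
  nlinarith [mul_pos (sub_pos.mpr h1) (sub_pos.mpr h2)]

set_option maxHeartbeats 1000000 in
/-- If `λC̄ < 1`, there exists `ρ₀ ≥ (eλC̄)²` such that:
(i) for every `ρ` with `(eλC̄)² ≤ ρ ≤ ρ₀`, `p* = 1` is a symmetric Nash
equilibrium of the delay-based game with utility
`U(p′,p) = −exp(pλC)/p′ − ρp′` (`C = 2C̄`); and (ii) for every `ρ ≥ ρ₀`,
the equation `p√ρ = exp(pλC̄)` has exactly one solution `p ∈ (0,1]`, this
solution satisfies `p ≤ 1/(λC̄)`, and it is the unique symmetric Nash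
equilibrium. -/
theorem stmt_11 (lam Cb : ℝ) (hlam : 0 < lam) (hCb : 0 < Cb)
    (h : lam * Cb < 1) :
    ∃ ρ0 : ℝ, (Real.exp 1 * lam * Cb) ^ 2 ≤ ρ0 ∧
      (∀ ρ : ℝ, (Real.exp 1 * lam * Cb) ^ 2 ≤ ρ → ρ ≤ ρ0 →
        ∀ q ∈ Set.Ioc (0:ℝ) 1,
          -Real.exp ((1:ℝ) * lam * (2 * Cb)) / q - ρ * q ≤
            -Real.exp ((1:ℝ) * lam * (2 * Cb)) / 1 - ρ * 1) ∧
      (∀ ρ : ℝ, ρ0 ≤ ρ →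
        ∃ p ∈ Set.Ioc (0:ℝ) 1,
          p * Real.sqrt ρ = Real.exp (p * lam * Cb) ∧
          p ≤ 1 / (lam * Cb) ∧
          (∀ q ∈ Set.Ioc (0:ℝ) 1,
            q * Real.sqrt ρ = Real.exp (q * lam * Cb) → q = p) ∧
          (∀ q ∈ Set.Ioc (0:ℝ) 1,
            -Real.exp (p * lam * (2 * Cb)) / q - ρ * q ≤
              -Real.exp (p * lam * (2 * Cb)) / p - ρ * p) ∧
          (∀ p' ∈ Set.Ioc (0:ℝ) 1,
            (∀ q ∈ Set.Ioc (0:ℝ) 1,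
              -Real.exp (p' * lam * (2 * Cb)) / q - ρ * q ≤
                -Real.exp (p' * lam * (2 * Cb)) / p' - ρ * p') → p' = p)) := by
  set a : ℝ := lam * Cb with ha_def
  clear_value a
  have ha : 0 < a := by rw [ha_def]; positivity
  have ha1 : a < 1 := h
  have hea : 0 < Real.exp a := Real.exp_pos a
  refine ⟨Real.exp a ^ 2, ?_, ?_, ?_⟩
  · -- (eλC̄)² ≤ ρ₀ = e^{2a}
    have h1 : Real.exp 1 * lam * Cb = Real.exp 1 * a := by rw [ha_def]; ring
    rw [h1]
    have h2 : Real.exp 1 * a ≤ Real.exp a := by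
      have h3 : Real.exp a = Real.exp 1 * Real.exp (a - 1) := by
        rw [← Real.exp_add]; ring_nf
      have h4 := Real.add_one_le_exp (a - 1)
      nlinarith [Real.exp_pos 1]
    have h5 : 0 ≤ Real.exp 1 * a := by positivity
    exact pow_le_pow_left₀ h5 h2 2
  · -- part (i)
    intro ρ hρl hρu q hq
    obtain ⟨hq0, hq1⟩ := hq
    have hρ0 : 0 ≤ ρ := le_trans (sq_nonneg _) hρl
    have hE : Real.exp ((1:ℝ) * lam * (2 * Cb)) = Real.exp a ^ 2 := by
      rw [sq, ← Real.exp_add]; congr 1; rw [ha_def]; ring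
    rw [hE]
    set E := Real.exp a ^ 2 with hE_def
    clear_value E
    have hdiff : (-E/q - ρ*q) - (-E/1 - ρ*1) = (1-q)*(ρ*q - E)/q := by
      field_simp
      ring
    have h1 : ρ * q ≤ E := by nlinarith
    have h2 : (1-q)*(ρ*q - E)/q ≤ 0 :=
      div_nonpos_of_nonpos_of_nonneg (by nlinarith) hq0.le
    linarith
  · -- part (ii)
    intro ρ hρ
    have hρpos : 0 < ρ := lt_of_lt_of_le (by positivity) hρ
    have hsp : 0 < Real.sqrt ρ := Real.sqrt_pos.mpr hρpos
    have hsge : Real.exp a ≤ Real.sqrt ρ := by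
      rw [show Real.exp a = Real.sqrt (Real.exp a ^ 2) from (Real.sqrt_sq hea.le).symm]
      exact Real.sqrt_le_sqrt hρ
    set g : ℝ → ℝ := fun x => x * Real.exp (-(a*x)) with hg_def
    have hmono := gmono a ha ha1
    have hcont : ContinuousOn g (Set.Icc 0 1) := by fun_prop
    have hmem : (Real.sqrt ρ)⁻¹ ∈ Set.Icc (g 0) (g 1) := by
      constructor
      · simp [hg_def]
      · have : g 1 = (Real.exp a)⁻¹ := by
          simp [hg_def, Real.exp_neg]
        rw [this]
        exact inv_anti₀ hea hsge
    obtain ⟨p, hpI, hgp⟩ := intermediate_value_Icc (by norm_num : (0:ℝ) ≤ 1) hcont hmem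
    have hp0 : 0 < p := by
      rcases hpI.1.lt_or_eq with h' | h'
      · exact h'
      · exfalso
        have : g p = 0 := by simp [hg_def, ← h']
        rw [this] at hgp
        exact absurd hgp.symm (by positivity)
    have hp1 : p ≤ 1 := hpI.2
    -- the equation
    have heqp : p * Real.sqrt ρ = Real.exp (a * p) := by
      have : p * Real.exp (-(a*p)) = (Real.sqrt ρ)⁻¹ := hgp
      rw [Real.exp_neg] at this
      field_simp at this
      rw [mul_comm a p]; linarith [this]
    have heqp' : p * Real.sqrt ρ = Real.exp (p * lam * Cb) := by
      rw [heqp]; congr 1; rw [ha_def]; ring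
    -- uniqueness of the solution
    have huniq : ∀ q ∈ Set.Ioc (0:ℝ) 1,
        q * Real.sqrt ρ = Real.exp (q * lam * Cb) → q = p := by
      intro q hq heq
      have heq2 : q * Real.sqrt ρ = Real.exp (a * q) := by
        rw [heq]; congr 1; rw [ha_def]; ring
      have hgq : g q = (Real.sqrt ρ)⁻¹ := by
        simp only [hg_def]
        rw [Real.exp_neg]
        field_simp
        rw [mul_comm q a]; nlinarith [Real.exp_pos (a*q)]
      exact hmono.injOn ⟨hq.1.le, hq.2⟩ ⟨hpI.1, hpI.2⟩ (hgq.trans hgp.symm)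
    refine ⟨p, ⟨hp0, hp1⟩, heqp', ?_, huniq, ?_, ?_⟩
    · -- p ≤ 1/a
      have h1 : (1:ℝ) ≤ 1 / a := by
        rw [le_div_iff₀ ha]; linarith
      linarith
    · -- p is an SNE
      intro q hq
      obtain ⟨hq0, hq1⟩ := hq
      have hE2 : Real.exp (p * lam * (2 * Cb)) = p^2 * ρ := by
        have h1 : Real.exp (p * lam * (2 * Cb)) = Real.exp (a * p) ^ 2 := by
          rw [sq, ← Real.exp_add]; congr 1; rw [ha_def]; ring
        rw [h1, ← heqp]
        rw [mul_pow, Real.sq_sqrt hρpos.le]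
      rw [hE2]
      have hdiff : (-(p^2*ρ)/q - ρ*q) - (-(p^2*ρ)/p - ρ*p) = -(ρ*(p-q)^2/q) := by
        field_simp
        ring
      have h2 : 0 ≤ ρ*(p-q)^2/q := by positivity
      linarith
    · -- uniqueness of SNE
      intro p' hp' hsne
      obtain ⟨hp'0, hp'1⟩ := hp'
      set E' := Real.exp (p' * lam * (2 * Cb)) with hE'_def
      clear_value E'
      have hE'pos : 0 < E' := by rw [hE'_def]; exact Real.exp_pos _
      have key : ∀ q ∈ Set.Ioc (0:ℝ) 1, 0 ≤ (q - p') * (ρ*q*p' - E') := by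
        intro q hq
        have h1 := hsne q hq
        have hq0 := hq.1
        rw [neg_div, neg_div] at h1
        have h3 : E'/p' + ρ*p' ≤ E'/q + ρ*q := by linarith
        have h4 := mul_le_mul_of_nonneg_right h3 (show (0:ℝ) ≤ q*p' by positivity)
        have h5 : E'/p' * (q*p') = E' * q := by
          field_simp
        have h6 : E'/q * (q*p') = E' * p' := by
          field_simp
        nlinarith [h4, h5, h6]
      rcases hp'1.lt_or_eq with hlt | heq1
      · -- interior case: ρ p'² = E'
        have hm : 0 < E' / (ρ * p') := by positivity
        have hle : ρ * p'^2 ≤ E' := by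
          by_contra hc
          push_neg at hc
          have hm0 : 0 < E' / (ρ * p') := by positivity
          have hEm : E' / (ρ * p') * (ρ * p') = E' := div_mul_cancel₀ _ (by positivity)
          have hmp : E' / (ρ * p') < p' := by
            rw [div_lt_iff₀ (by positivity)]; nlinarith
          have hq0 : 0 < (E' / (ρ * p') + p')/2 := by positivity
          have hqp : (E' / (ρ * p') + p')/2 < p' := by linarith
          have hq1 : (E' / (ρ * p') + p')/2 ≤ 1 := by linarith
          have hkey := key _ ⟨hq0, hq1⟩
          have hmq := mul_lt_mul_of_pos_right
            (show E' / (ρ * p') < (E' / (ρ * p') + p')/2 by linarith)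
            (show (0:ℝ) < ρ * p' by positivity)
          rw [hEm] at hmq
          have h7 : E' < ρ * ((E' / (ρ * p') + p')/2) * p' := by linarith [hmq]
          exact sign_contra1 ρ p' _ E' hqp h7 hkey
        have hge : E' ≤ ρ * p'^2 := by
          by_contra hc
          push_neg at hc
          have hm0 : 0 < E' / (ρ * p') := by positivity
          have hEm : E' / (ρ * p') * (ρ * p') = E' := div_mul_cancel₀ _ (by positivity)
          have hmp : p' < E' / (ρ * p') := by
            rw [lt_div_iff₀ (by positivity)]; nlinarith
          have hq0 : 0 < min 1 ((E' / (ρ * p') + p')/2) :=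
            lt_min one_pos (by positivity)
          have hqp : p' < min 1 ((E' / (ρ * p') + p')/2) :=
            lt_min hlt (by linarith)
          have hq1 : min 1 ((E' / (ρ * p') + p')/2) ≤ 1 := min_le_left _ _
          have hkey := key _ ⟨hq0, hq1⟩
          have hqm : min 1 ((E' / (ρ * p') + p')/2) < E' / (ρ * p') :=
            lt_of_le_of_lt (min_le_right _ _) (by linarith)
          have hmq := mul_lt_mul_of_pos_right hqm (show (0:ℝ) < ρ * p' by positivity)
          rw [hEm] at hmq
          have h7 : ρ * min 1 ((E' / (ρ * p') + p')/2) * p' < E' := by linarith [hmq]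
          exact sign_contra2 ρ p' _ E' hqp h7 hkey
        have heqE : ρ * p'^2 = E' := le_antisymm hle hge
        -- so p'√ρ = exp(a p')
        have h8 : E' = Real.exp (a * p') ^ 2 := by
          rw [hE'_def, sq, ← Real.exp_add]; congr 1; rw [ha_def]; ring
        have h9 : p' * Real.sqrt ρ = Real.exp (a * p') := by
          have h10 : p' * Real.sqrt ρ = Real.sqrt (ρ * p'^2) := by
            rw [Real.sqrt_mul hρpos.le, Real.sqrt_sq hp'0.le]; ring
          rw [h10, heqE, h8, Real.sqrt_sq (Real.exp_pos _).le]
        exact huniq p' ⟨hp'0, hp'1⟩ (by rw [h9]; congr 1; rw [ha_def]; ring)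
      · -- boundary case p' = 1
        have hρleE : ρ ≤ E' := by
          by_contra hc
          push_neg at hc
          have hq0 : 0 < (E'/ρ + 1)/2 := by positivity
          have hm1 : E'/ρ < 1 := (div_lt_one hρpos).mpr hc
          have hq1 : (E'/ρ + 1)/2 < 1 := by linarith
          have hkey := key _ ⟨hq0, hq1.le⟩
          rw [heq1] at hkey
          have hEρ : E'/ρ * ρ = E' := div_mul_cancel₀ _ (ne_of_gt hρpos)
          have hmq := mul_lt_mul_of_pos_right
            (show E'/ρ < (E'/ρ + 1)/2 by linarith) hρpos
          rw [hEρ] at hmq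
          have h7 : E' < ρ * ((E'/ρ + 1)/2) * 1 := by linarith [hmq]
          exact sign_contra1 ρ 1 _ E' hq1 h7 hkey
        have hEa : E' = Real.exp a ^ 2 := by
          rw [hE'_def, heq1, sq, ← Real.exp_add]; congr 1; rw [ha_def]; ring
        have hρeq : ρ = Real.exp a ^ 2 := le_antisymm (hρleE.trans_eq hEa) hρ
        refine huniq p' ⟨hp'0, hp'1⟩ ?_
        rw [heq1, hρeq, Real.sqrt_sq hea.le, one_mul]
        congr 1
        rw [ha_def]
        ring
end

section
/- Fix λ > 0 and C̄ > 0. For every ρ ≥ (eλC̄)² the equation p√ρ = exp(pλC̄) has a least positive solution q(ρ), and q(ρ) ≤ 1/(λC̄); the function ρ ↦ ρ q(ρ) on [(eλC̄)², ∞) is quasiconvex (nonincreasing on [(eλC̄)², 4e(λC̄)²] and nondecreasing on [4e(λC̄)², ∞)) and attains its global minimum eλC̄·2 = 2eλC̄ at ρ* = 4e(λC̄)², where q(ρ*) = 1/(2λC̄). Moreover, for every ρ ≥ (eλC̄)² the equation also has a greatest solution Q(ρ) ≥ 1/(λC̄), the function ρ ↦ ρ Q(ρ) is nondecreasing on [(eλC̄)²,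 ∞), and ρ Q(ρ) = e²λC̄ at ρ = (eλC̄)². -/
open Real Set

noncomputable section
namespace Stmt13

def h (t : ℝ) : ℝ := Real.exp t / t
def g (t : ℝ) : ℝ := Real.exp (2*t) / t

lemma h_hasDeriv {t : ℝ} (ht : t ≠ 0) :
    HasDerivAt h ((Real.exp t * t - Real.exp t * 1) / t ^ 2) t :=
  (Real.hasDerivAt_exp t).div (hasDerivAt_id t) ht

lemma g_hasDeriv {t : ℝ} (ht : t ≠ 0) :
    HasDerivAt g ((Real.exp (2*t) * 2 * t - Real.exp (2*t) * 1) / t ^ 2) t := by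
  have h2 : HasDerivAt (fun t : ℝ => 2*t) 2 t := by
    simpa using (hasDerivAt_id t).const_mul 2
  have he : HasDerivAt (fun t : ℝ => Real.exp (2*t)) (Real.exp (2*t) * 2) t :=
    (Real.hasDerivAt_exp (2*t)).comp t h2
  exact he.div (hasDerivAt_id t) ht

lemma h_contOn {s : Set ℝ} (hs : (0:ℝ) ∉ s) : ContinuousOn h s := by
  intro t ht
  exact (Real.continuous_exp.continuousAt.div continuousAt_id
    (fun h0 => hs (h0 ▸ ht))).continuousWithinAt

lemma g_contOn {s : Set ℝ} (hs : (0:ℝ) ∉ s) : ContinuousOn g s := by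
  intro t ht
  exact ((Real.continuous_exp.comp (continuous_const.mul continuous_id)).continuousAt.div
    continuousAt_id (fun h0 => hs (h0 ▸ ht))).continuousWithinAt

lemma h_anti : StrictAntiOn h (Ioc (0:ℝ) 1) := by
  apply strictAntiOn_of_deriv_neg (convex_Ioc 0 1) (h_contOn (by simp))
  intro t ht
  rw [interior_Ioc] at ht
  obtain ⟨ht1, ht2⟩ := ht
  rw [(h_hasDeriv (ne_of_gt ht1)).deriv]
  apply div_neg_of_neg_of_pos
  · nlinarith [Real.exp_pos t]
  · positivity

lemma h_mono : StrictMonoOn h (Ici (1:ℝ)) := by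
  apply strictMonoOn_of_deriv_pos (convex_Ici 1) (h_contOn (by simp))
  intro t ht
  rw [interior_Ici] at ht
  have ht1 := mem_Ioi.mp ht
  rw [(h_hasDeriv (by linarith)).deriv]
  apply div_pos
  · nlinarith [Real.exp_pos t]
  · nlinarith

lemma g_anti : StrictAntiOn g (Ioc (0:ℝ) (1/2)) := by
  apply strictAntiOn_of_deriv_neg (convex_Ioc 0 (1/2)) (g_contOn (by simp))
  intro t ht
  rw [interior_Ioc] at ht
  obtain ⟨ht1, ht2⟩ := ht
  rw [(g_hasDeriv (ne_of_gt ht1)).deriv]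
  apply div_neg_of_neg_of_pos
  · nlinarith [Real.exp_pos (2*t)]
  · positivity

lemma g_mono : StrictMonoOn g (Ici (1/2:ℝ)) := by
  apply strictMonoOn_of_deriv_pos (convex_Ici (1/2)) (g_contOn (by norm_num))
  intro t ht
  rw [interior_Ici] at ht
  have ht' := mem_Ioi.mp ht
  rw [(g_hasDeriv (by linarith)).deriv]
  apply div_pos
  · nlinarith [Real.exp_pos (2*t)]
  · nlinarith

lemma exists_tm {x : ℝ} (hx : Real.exp 1 ≤ x) : ∃ t ∈ Ioc (0:ℝ) 1, h t = x := by
  have hx0 : (0:ℝ) < x := lt_of_lt_of_le (Real.exp_pos 1) hx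
  have h1x : (0:ℝ) < 1/x := by positivity
  have hle : (1:ℝ)/x ≤ 1 := by
    rw [div_le_one hx0]; linarith [Real.one_le_exp (le_refl 0 |>.trans zero_le_one)]
  have hcont : ContinuousOn h (Icc (1/x) 1) := h_contOn (by
    intro h0; exact absurd (h0 : (0:ℝ) ∈ Icc (1/x) 1).1 (by linarith))
  have hmem : x ∈ Icc (h 1) (h (1/x)) := by
    constructor
    · simpa [h] using hx
    · rw [h, div_div_eq_mul_div, div_one]
      nlinarith [Real.one_le_exp (le_of_lt h1x)]
  obtain ⟨t, ht, hht⟩ := intermediate_value_Icc' hle hcont hmem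
  exact ⟨t, ⟨lt_of_lt_of_le h1x ht.1, ht.2⟩, hht⟩

lemma exists_tp {x : ℝ} (hx : Real.exp 1 ≤ x) : ∃ t ∈ Ici (1:ℝ), h t = x := by
  have hx1 : (1:ℝ) ≤ x := le_trans (Real.one_le_exp zero_le_one) hx
  have hle : (1:ℝ) ≤ x^2 := by nlinarith
  have hcont : ContinuousOn h (Icc 1 (x^2)) := h_contOn (by
    intro h0; exact absurd (h0 : (0:ℝ) ∈ Icc 1 (x^2)).1 (by norm_num))
  have hmem : x ∈ Icc (h 1) (h (x^2)) := by
    constructor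
    · simpa [h] using hx
    · rw [h, le_div_iff₀ (by positivity)]
      have e1 : Real.exp (x^2/3) ^ 3 = Real.exp (x^2) := by
        rw [← Real.exp_nat_mul]; norm_num; ring_nf
      have e2 : x^2/3 + 1 ≤ Real.exp (x^2/3) := Real.add_one_le_exp _
      have hyx : x ≤ x^2/3 + 1 := by nlinarith [sq_nonneg (x - 3/2)]
      have c1 : x^3 ≤ (x^2/3+1)^3 := pow_le_pow_left₀ (by linarith) hyx 3
      have c2 : (x^2/3+1)^3 ≤ Real.exp (x^2/3)^3 := pow_le_pow_left₀ (by positivity) e2 3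
      nlinarith
  obtain ⟨t, ht, hht⟩ := intermediate_value_Icc hle hcont hmem
  exact ⟨t, ht.1, hht⟩


def tm (x : ℝ) : ℝ := if hx : Real.exp 1 ≤ x then (exists_tm hx).choose else 1
def tp (x : ℝ) : ℝ := if hx : Real.exp 1 ≤ x then (exists_tp hx).choose else 1

lemma tm_mem {x : ℝ} (hx : Real.exp 1 ≤ x) : tm x ∈ Ioc (0:ℝ) 1 := by
  rw [tm, dif_pos hx]; exact (exists_tm hx).choose_spec.1
lemma h_tm {x : ℝ} (hx : Real.exp 1 ≤ x) : h (tm x) = x := by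
  rw [tm, dif_pos hx]; exact (exists_tm hx).choose_spec.2
lemma tp_mem {x : ℝ} (hx : Real.exp 1 ≤ x) : tp x ∈ Ici (1:ℝ) := by
  rw [tp, dif_pos hx]; exact (exists_tp hx).choose_spec.1
lemma h_tp {x : ℝ} (hx : Real.exp 1 ≤ x) : h (tp x) = x := by
  rw [tp, dif_pos hx]; exact (exists_tp hx).choose_spec.2

lemma tm_eq {x t : ℝ} (hx : Real.exp 1 ≤ x) (ht : t ∈ Ioc (0:ℝ) 1) (hht : h t = x) :
    t = tm x := h_anti.injOn ht (tm_mem hx) (by rw [hht, h_tm hx])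
lemma tp_eq {x t : ℝ} (hx : Real.exp 1 ≤ x) (ht : t ∈ Ici (1:ℝ)) (hht : h t = x) :
    t = tp x := h_mono.injOn ht (tp_mem hx) (by rw [hht, h_tp hx])

lemma tm_anti {x₁ x₂ : ℝ} (h1 : Real.exp 1 ≤ x₁) (h2 : Real.exp 1 ≤ x₂) (hle : x₁ ≤ x₂) :
    tm x₂ ≤ tm x₁ :=
  (h_anti.le_iff_ge (tm_mem h1) (tm_mem h2)).mp (by rw [h_tm h1, h_tm h2]; exact hle)
lemma tp_mono {x₁ x₂ : ℝ} (h1 : Real.exp 1 ≤ x₁) (h2 : Real.exp 1 ≤ x₂) (hle : x₁ ≤ x₂) :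
    tp x₁ ≤ tp x₂ :=
  (h_mono.le_iff_le (tp_mem h1) (tp_mem h2)).mp (by rw [h_tp h1, h_tp h2]; exact hle)

lemma tm_ge {x c : ℝ} (hx : Real.exp 1 ≤ x) (hc : c ∈ Ioc (0:ℝ) 1) (hcx : x ≤ h c) :
    c ≤ tm x :=
  (h_anti.le_iff_ge (tm_mem hx) hc).mp (by rw [h_tm hx]; exact hcx)
lemma tm_le {x c : ℝ} (hx : Real.exp 1 ≤ x) (hc : c ∈ Ioc (0:ℝ) 1) (hcx : h c ≤ x) :
    tm x ≤ c :=
  (h_anti.le_iff_ge hc (tm_mem hx)).mp (by rw [h_tm hx]; exact hcx)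

lemma exp_half_sq : Real.exp (1/2) ^ 2 = Real.exp 1 := by
  rw [← Real.exp_nat_mul]; norm_num

lemma h_half : h (1/2) = 2 * Real.exp (1/2) := by rw [h]; ring

lemma exp_two_mul' (t : ℝ) : Real.exp (2*t) = Real.exp t ^ 2 := by
  rw [two_mul, Real.exp_add]; ring

lemma val_eq {a x t : ℝ} (ha : a ≠ 0) (ht : t ≠ 0) (hh : Real.exp t = x * t) :
    (a*x)^2 * (t/a) = a * g t := by
  rw [g, exp_two_mul', hh]
  field_simp

end Stmt13

open Stmt13 in
set_option maxHeartbeats 1000000 in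
/-- For `λ > 0`, `C̄ > 0`: for every `ρ ≥ (eλC̄)²` the equation
`p√ρ = exp(pλC̄)` has a least positive solution `q(ρ) ≤ 1/(λC̄)` and a
greatest solution `Q(ρ) ≥ 1/(λC̄)`; `ρ ↦ ρ q(ρ)` is quasiconvex
(nonincreasing on `[(eλC̄)², 4e(λC̄)²]`, nondecreasing on `[4e(λC̄)², ∞)`)
with global minimum `2eλC̄` attained at `ρ* = 4e(λC̄)²`, where
`q(ρ*) = 1/(2λC̄)`; `ρ ↦ ρ Q(ρ)` is nondecreasing on `[(eλC̄)², ∞)` and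
`ρ Q(ρ) = e²λC̄` at `ρ = (eλC̄)²`. -/
theorem stmt_13 (lam Cb : ℝ) (hlam : 0 < lam) (hCb : 0 < Cb) :
    ∃ q Q : ℝ → ℝ,
      (∀ ρ : ℝ, (Real.exp 1 * lam * Cb) ^ 2 ≤ ρ →
        IsLeast {p : ℝ | 0 < p ∧ p * Real.sqrt ρ = Real.exp (p * lam * Cb)}
          (q ρ) ∧
        q ρ ≤ 1 / (lam * Cb) ∧
        IsGreatest {p : ℝ | 0 < p ∧ p * Real.sqrt ρ = Real.exp (p * lam * Cb)}
          (Q ρ) ∧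
        1 / (lam * Cb) ≤ Q ρ) ∧
      AntitoneOn (fun ρ => ρ * q ρ)
        (Set.Icc ((Real.exp 1 * lam * Cb) ^ 2)
          (4 * Real.exp 1 * (lam * Cb) ^ 2)) ∧
      MonotoneOn (fun ρ => ρ * q ρ)
        (Set.Ici (4 * Real.exp 1 * (lam * Cb) ^ 2)) ∧
      (∀ ρ : ℝ, (Real.exp 1 * lam * Cb) ^ 2 ≤ ρ →
        2 * Real.exp 1 * lam * Cb ≤ ρ * q ρ) ∧
      (4 * Real.exp 1 * (lam * Cb) ^ 2) *
          q (4 * Real.exp 1 * (lam * Cb) ^ 2) = 2 * Real.exp 1 * lam * Cb ∧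
      q (4 * Real.exp 1 * (lam * Cb) ^ 2) = 1 / (2 * lam * Cb) ∧
      MonotoneOn (fun ρ => ρ * Q ρ)
        (Set.Ici ((Real.exp 1 * lam * Cb) ^ 2)) ∧
      (Real.exp 1 * lam * Cb) ^ 2 * Q ((Real.exp 1 * lam * Cb) ^ 2) =
        Real.exp 1 ^ 2 * lam * Cb := by
  have ha : 0 < lam * Cb := mul_pos hlam hCb
  set a : ℝ := lam * Cb with ha_def
  set ρ₀ : ℝ := (Real.exp 1 * lam * Cb) ^ 2 with hρ₀_def
  set ρs : ℝ := 4 * Real.exp 1 * (lam * Cb) ^ 2 with hρs_def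
  -- basic facts
  have hρ₀pos : 0 < ρ₀ := by rw [hρ₀_def]; positivity
  have hsqρ₀ : Real.sqrt ρ₀ = Real.exp 1 * a := by
    rw [hρ₀_def, show Real.exp 1 * lam * Cb = Real.exp 1 * a by rw [ha_def]; ring]
    exact Real.sqrt_sq (by positivity)
  have hsqρs : Real.sqrt ρs = 2 * Real.exp (1/2) * a := by
    rw [hρs_def, show 4 * Real.exp 1 * (lam * Cb) ^ 2 = (2 * Real.exp (1/2) * a) ^ 2 by
      rw [ha_def]; nlinarith [exp_half_sq]]
    exact Real.sqrt_sq (by positivity)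
  have hρ₀ρs : ρ₀ ≤ ρs := by
    rw [hρ₀_def, hρs_def]
    nlinarith [Real.exp_one_lt_d9, Real.exp_pos 1, sq_nonneg (lam*Cb), mul_pos hlam hCb]
  have hxge : ∀ ρ : ℝ, ρ₀ ≤ ρ → Real.exp 1 ≤ Real.sqrt ρ / a := by
    intro ρ hρ
    rw [le_div_iff₀ ha]
    calc Real.exp 1 * a = Real.sqrt ρ₀ := hsqρ₀.symm
    _ ≤ Real.sqrt ρ := Real.sqrt_le_sqrt hρ
  have hsx : ∀ ρ : ℝ, 0 ≤ ρ → Real.sqrt ρ = a * (Real.sqrt ρ / a) := by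
    intro ρ _; field_simp
  -- membership characterization
  have hmem : ∀ ρ p : ℝ, ρ₀ ≤ ρ → 0 < p →
      (p * Real.sqrt ρ = Real.exp (p * lam * Cb) ↔ h (a * p) = Real.sqrt ρ / a) := by
    intro ρ p hρ hp
    have hap : 0 < a * p := by positivity
    rw [h, show p * lam * Cb = a * p by rw [ha_def]; ring,
      div_eq_div_iff hap.ne' ha.ne']
    constructor
    · intro he; linear_combination (-(lam*Cb)) * he
    · intro he
      refine mul_left_cancel₀ ha.ne' ?_
      linear_combination -he
  have hρpos : ∀ ρ : ℝ, ρ₀ ≤ ρ → 0 < ρ := fun ρ hρ => lt_of_lt_of_le hρ₀pos hρ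
  have hρeq : ∀ ρ : ℝ, ρ₀ ≤ ρ → ρ = (a * (Real.sqrt ρ / a)) ^ 2 := by
    intro ρ hρ
    rw [← hsx ρ (hρpos ρ hρ).le, Real.sq_sqrt (hρpos ρ hρ).le]
  have hvalq : ∀ ρ : ℝ, ρ₀ ≤ ρ →
      ρ * (tm (Real.sqrt ρ / a) / a) = a * g (tm (Real.sqrt ρ / a)) := by
    intro ρ hρ
    have hx := hxge ρ hρ
    have htm := tm_mem hx
    have hh := h_tm hx
    rw [h, div_eq_iff (ne_of_gt htm.1)] at hh
    nth_rewrite 1 [hρeq ρ hρ]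
    exact val_eq ha.ne' (ne_of_gt htm.1) hh
  have hvalQ : ∀ ρ : ℝ, ρ₀ ≤ ρ →
      ρ * (tp (Real.sqrt ρ / a) / a) = a * g (tp (Real.sqrt ρ / a)) := by
    intro ρ hρ
    have hx := hxge ρ hρ
    have htp0 : 0 < tp (Real.sqrt ρ / a) := lt_of_lt_of_le one_pos (tp_mem hx)
    have hh := h_tp hx
    rw [h, div_eq_iff (ne_of_gt htp0)] at hh
    nth_rewrite 1 [hρeq ρ hρ]
    exact val_eq ha.ne' (ne_of_gt htp0) hh
  have hxmono : ∀ ρ₁ ρ₂ : ℝ, ρ₁ ≤ ρ₂ → Real.sqrt ρ₁ / a ≤ Real.sqrt ρ₂ / a :=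
    fun ρ₁ ρ₂ hle => (div_le_div_iff_of_pos_right ha).mpr (Real.sqrt_le_sqrt hle)
  have hxle : ∀ ρ : ℝ, ρ ≤ ρs → Real.sqrt ρ / a ≤ 2 * Real.exp (1/2) := by
    intro ρ hρ
    rw [div_le_iff₀ ha]
    calc Real.sqrt ρ ≤ Real.sqrt ρs := Real.sqrt_le_sqrt hρ
    _ = 2 * Real.exp (1/2) * a := hsqρs
  have hxge' : ∀ ρ : ℝ, ρs ≤ ρ → 2 * Real.exp (1/2) ≤ Real.sqrt ρ / a := by
    intro ρ hρ
    rw [le_div_iff₀ ha]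
    calc 2 * Real.exp (1/2) * a = Real.sqrt ρs := hsqρs.symm
    _ ≤ Real.sqrt ρ := Real.sqrt_le_sqrt hρ
  have hs2 : Real.exp (1/2) ≤ 2 := by
    nlinarith [exp_half_sq, Real.exp_one_lt_d9]
  have hxsge : Real.exp 1 ≤ 2 * Real.exp (1/2) := by
    nlinarith [exp_half_sq, Real.exp_pos (1/2:ℝ), hs2]
  -- the two solution functions
  refine ⟨fun ρ => tm (Real.sqrt ρ / a) / a, fun ρ => tp (Real.sqrt ρ / a) / a,
    ?_, ?_, ?_, ?_, ?_, ?_, ?_, ?_⟩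
  · -- IsLeast / IsGreatest
    intro ρ hρ
    have hx := hxge ρ hρ
    set x := Real.sqrt ρ / a with hx_def
    have htm := tm_mem hx
    have htp := tp_mem hx
    have htp0 : 0 < tp x := lt_of_lt_of_le one_pos htp
    have key : ∀ t : ℝ, 0 < t → h t = x →
        (t / a) ∈ {p : ℝ | 0 < p ∧ p * Real.sqrt ρ = Real.exp (p * lam * Cb)} := by
      intro t ht hht
      refine ⟨by positivity, ?_⟩
      rw [hmem ρ (t/a) hρ (by positivity), show a * (t / a) = t by field_simp]
      exact hht
    have keyrev : ∀ p ∈ {p : ℝ | 0 < p ∧ p * Real.sqrt ρ = Real.exp (p * lam * Cb)},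
        0 < a * p ∧ h (a * p) = x := by
      intro p hp
      exact ⟨mul_pos ha hp.1, (hmem ρ p hρ hp.1).mp hp.2⟩
    refine ⟨⟨key _ htm.1 (h_tm hx), ?_⟩, ?_, ⟨key _ htp0 (h_tp hx), ?_⟩, ?_⟩
    · -- lower bound
      intro p hp
      show tm x / a ≤ p
      obtain ⟨hap, hhp⟩ := keyrev p hp
      rcases le_or_gt (a * p) 1 with hle | hlt
      · have := tm_eq hx ⟨hap, hle⟩ hhp
        rw [← this]; rw [div_le_iff₀ ha]; nlinarith
      · rw [div_le_iff₀ ha]; nlinarith [htm.2, mul_comm a p]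
    · -- q ≤ 1/a
      show tm x / a ≤ 1 / a
      rw [div_le_div_iff₀ ha ha]; nlinarith [htm.2, ha]
    · -- upper bound
      intro p hp
      show p ≤ tp x / a
      obtain ⟨hap, hhp⟩ := keyrev p hp
      rcases le_or_gt 1 (a * p) with hle | hlt
      · have := tp_eq hx hle hhp
        rw [← this]; rw [le_div_iff₀ ha]; nlinarith
      · rw [le_div_iff₀ ha]; nlinarith [mem_Ici.mp htp, mul_comm a p]
    · -- 1/a ≤ Q
      show 1 / a ≤ tp x / a
      rw [div_le_div_iff₀ ha ha]; nlinarith [mem_Ici.mp htp, ha]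
  · -- Antitone on Icc
    intro ρ₁ h1 ρ₂ h2 hle
    have hx1 := hxge ρ₁ h1.1
    have hx2 := hxge ρ₂ h2.1
    have ht21 := tm_anti hx1 hx2 (hxmono ρ₁ ρ₂ hle)
    have hb1 : (1:ℝ)/2 ≤ tm (Real.sqrt ρ₁ / a) :=
      tm_ge hx1 ⟨by norm_num, by norm_num⟩ (by rw [h_half]; exact hxle ρ₁ h1.2)
    have hb2 : (1:ℝ)/2 ≤ tm (Real.sqrt ρ₂ / a) :=
      tm_ge hx2 ⟨by norm_num, by norm_num⟩ (by rw [h_half]; exact hxle ρ₂ h2.2)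
    show ρ₂ * (tm (Real.sqrt ρ₂ / a) / a) ≤ ρ₁ * (tm (Real.sqrt ρ₁ / a) / a)
    rw [hvalq ρ₁ h1.1, hvalq ρ₂ h2.1]
    exact mul_le_mul_of_nonneg_left (g_mono.monotoneOn hb2 hb1 ht21) ha.le
  · -- Monotone on Ici ρs
    intro ρ₁ h1 ρ₂ h2 hle
    have h1' : ρ₀ ≤ ρ₁ := le_trans hρ₀ρs h1
    have h2' : ρ₀ ≤ ρ₂ := le_trans hρ₀ρs h2
    have hx1 := hxge ρ₁ h1'
    have hx2 := hxge ρ₂ h2'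
    have ht21 := tm_anti hx1 hx2 (hxmono ρ₁ ρ₂ hle)
    have hb1 : tm (Real.sqrt ρ₁ / a) ∈ Ioc (0:ℝ) (1/2) :=
      ⟨(tm_mem hx1).1, tm_le hx1 ⟨by norm_num, by norm_num⟩ (by rw [h_half]; exact hxge' ρ₁ h1)⟩
    have hb2 : tm (Real.sqrt ρ₂ / a) ∈ Ioc (0:ℝ) (1/2) :=
      ⟨(tm_mem hx2).1, tm_le hx2 ⟨by norm_num, by norm_num⟩ (by rw [h_half]; exact hxge' ρ₂ h2)⟩
    show ρ₁ * (tm (Real.sqrt ρ₁ / a) / a) ≤ ρ₂ * (tm (Real.sqrt ρ₂ / a) / a)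
    rw [hvalq ρ₁ h1', hvalq ρ₂ h2']
    exact mul_le_mul_of_nonneg_left (g_anti.antitoneOn hb2 hb1 ht21) ha.le
  · -- global minimum
    intro ρ hρ
    have hx := hxge ρ hρ
    have htm := tm_mem hx
    show 2 * Real.exp 1 * lam * Cb ≤ ρ * (tm (Real.sqrt ρ / a) / a)
    rw [hvalq ρ hρ, g]
    set t := tm (Real.sqrt ρ / a) with ht_def
    have key : 2 * Real.exp 1 ≤ Real.exp (2*t) / t := by
      rw [le_div_iff₀ htm.1]
      have h1 := Real.add_one_le_exp (2*t - 1)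
      have h2 : Real.exp (2*t) = Real.exp (2*t - 1) * Real.exp 1 := by
        rw [← Real.exp_add]; ring_nf
      nlinarith [mul_le_mul_of_nonneg_right h1 (Real.exp_pos 1).le]
    calc 2 * Real.exp 1 * lam * Cb = a * (2 * Real.exp 1) := by rw [ha_def]; ring
    _ ≤ a * (Real.exp (2*t) / t) := mul_le_mul_of_nonneg_left key ha.le
  · -- value at rho star
    have hxs : Real.sqrt ρs / a = 2 * Real.exp (1/2) := by rw [hsqρs]; field_simp
    have h6 : tm (Real.sqrt ρs / a) = 1/2 :=
      (tm_eq (by rw [hxs]; exact hxsge) ⟨by norm_num, by norm_num⟩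
        (by rw [h_half, hxs])).symm
    show ρs * (tm (Real.sqrt ρs / a) / a) = 2 * Real.exp 1 * lam * Cb
    rw [h6, hρs_def, ha_def]
    field_simp
    ring
  · -- q at rho star
    have hxs : Real.sqrt ρs / a = 2 * Real.exp (1/2) := by rw [hsqρs]; field_simp
    have h6 : tm (Real.sqrt ρs / a) = 1/2 :=
      (tm_eq (by rw [hxs]; exact hxsge) ⟨by norm_num, by norm_num⟩
        (by rw [h_half, hxs])).symm
    show tm (Real.sqrt ρs / a) / a = 1 / (2 * lam * Cb)
    rw [h6, ha_def]
    field_simp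
  · -- Q monotone
    intro ρ₁ h1 ρ₂ h2 hle
    have hx1 := hxge ρ₁ h1
    have hx2 := hxge ρ₂ h2
    have ht12 := tp_mono hx1 hx2 (hxmono ρ₁ ρ₂ hle)
    have hb1 : (1:ℝ)/2 ≤ tp (Real.sqrt ρ₁ / a) := by
      linarith [mem_Ici.mp (tp_mem hx1)]
    have hb2 : (1:ℝ)/2 ≤ tp (Real.sqrt ρ₂ / a) := by
      linarith [mem_Ici.mp (tp_mem hx2)]
    show ρ₁ * (tp (Real.sqrt ρ₁ / a) / a) ≤ ρ₂ * (tp (Real.sqrt ρ₂ / a) / a)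
    rw [hvalQ ρ₁ h1, hvalQ ρ₂ h2]
    exact mul_le_mul_of_nonneg_left (g_mono.monotoneOn hb1 hb2 ht12) ha.le
  · -- Q at rho0
    have hx0 : Real.sqrt ρ₀ / a = Real.exp 1 := by rw [hsqρ₀]; field_simp
    have h8 : tp (Real.sqrt ρ₀ / a) = 1 :=
      (tp_eq (le_of_eq hx0.symm) (mem_Ici.mpr le_rfl)
        (by rw [h, hx0]; simp)).symm
    show ρ₀ * (tp (Real.sqrt ρ₀ / a) / a) = Real.exp 1 ^ 2 * lam * Cb
    rw [h8, hρ₀_def, ha_def]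
    have he2 : Real.exp 2 = Real.exp 1 ^ 2 := by
      rw [show (2:ℝ) = 2*1 by norm_num, exp_two_mul']
    field_simp
end
end

section
/- Fix λ > 0 and C > 0 with λC ≥ 1, and let ρ ∈ (0,1). Then there is a unique p_m ∈ [0, 1/(λC)) satisfying exp(−p_mλC)(1 − p_mλC) = ρ, this p_m is the unique maximizer over p ∈ [0,1] of the team utility U(p) = λp exp(−pλC) − λρp, and the maximum value equals λ²Cρ p_m²/(1 − p_mλC). -/
private lemma g_hasDeriv (x : ℝ) :
    HasDerivAt (fun x => Real.exp (-x) * (1 - x)) (Real.exp (-x) * (x - 2)) x := by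
  have h1 : HasDerivAt (fun x : ℝ => Real.exp (-x)) (-Real.exp (-x)) x := by
    simpa using ((hasDerivAt_id x).neg.exp)
  have h2 : HasDerivAt (fun x : ℝ => 1 - x) (-1) x := by
    simpa using ((hasDerivAt_id x).const_sub 1)
  have := h1.fun_mul h2
  refine this.congr_deriv ?_
  ring

private lemma g_anti : StrictAntiOn (fun x => Real.exp (-x) * (1 - x)) (Set.Icc 0 2) := by
  apply strictAntiOn_of_deriv_neg (convex_Icc 0 2)
  · fun_prop
  · intro x hx
    rw [interior_Icc] at hx
    rw [(g_hasDeriv x).deriv]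
    nlinarith [Real.exp_pos (-x), hx.2]

private lemma f_hasDeriv (a ρ p : ℝ) :
    HasDerivAt (fun p => p * Real.exp (-(p * a)) - ρ * p)
      (Real.exp (-(p * a)) * (1 - p * a) - ρ) p := by
  have h1 : HasDerivAt (fun p : ℝ => -(p * a)) (-a) p := by
    simpa using ((hasDerivAt_id p).mul_const a).fun_neg
  have h2 : HasDerivAt (fun p : ℝ => Real.exp (-(p * a))) (Real.exp (-(p * a)) * (-a)) p :=
    h1.exp
  have h3 := ((hasDerivAt_id p).fun_mul h2).fun_sub ((hasDerivAt_id p).const_mul ρ)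
  refine h3.congr_deriv ?_
  simp only [id_eq]
  ring

/-- For `λC ≥ 1` and `ρ ∈ (0,1)`, there is a unique
`p_m ∈ [0, 1/(λC))` with `exp(−p_mλC)(1 − p_mλC) = ρ`; this `p_m` is the
unique maximizer over `p ∈ [0,1]` of the team utility
`U(p) = λp exp(−pλC) − λρp`, and the maximum value equals
`λ²Cρ p_m²/(1 − p_mλC)`. -/
theorem stmt_15 (lam C ρ : ℝ) (hlam : 0 < lam) (hC : 0 < C)
    (h1 : 1 ≤ lam * C) (hρ : ρ ∈ Set.Ioo (0:ℝ) 1) :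
    ∃ pm : ℝ,
      pm ∈ Set.Ico (0:ℝ) (1 / (lam * C)) ∧
      Real.exp (-(pm * lam * C)) * (1 - pm * lam * C) = ρ ∧
      (∀ q ∈ Set.Ico (0:ℝ) (1 / (lam * C)),
        Real.exp (-(q * lam * C)) * (1 - q * lam * C) = ρ → q = pm) ∧
      pm ∈ Set.Icc (0:ℝ) 1 ∧
      (∀ p ∈ Set.Icc (0:ℝ) 1, p ≠ pm →
        lam * p * Real.exp (-(p * lam * C)) - lam * ρ * p <
          lam * pm * Real.exp (-(pm * lam * C)) - lam * ρ * pm) ∧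
      lam * pm * Real.exp (-(pm * lam * C)) - lam * ρ * pm =
        lam ^ 2 * C * ρ * pm ^ 2 / (1 - pm * lam * C) := by
  obtain ⟨hρ0, hρ1⟩ := hρ
  set a := lam * C with ha_def
  have ha : 0 < a := lt_of_lt_of_le one_pos h1
  -- existence of xm via IVT
  have hcont : ContinuousOn (fun x => Real.exp (-x) * (1 - x)) (Set.Icc (0:ℝ) 1) := by
    fun_prop
  have hIVT := intermediate_value_Icc' (by norm_num : (0:ℝ) ≤ 1) hcont
  have hρmem : ρ ∈ Set.Icc (Real.exp (-(1:ℝ)) * (1 - 1)) (Real.exp (-(0:ℝ)) * (1 - 0)) := by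
    simp
    constructor <;> linarith
  obtain ⟨xm, hxm01, hg⟩ := hIVT hρmem
  have hg' : Real.exp (-xm) * (1 - xm) = ρ := hg
  have hx0 : 0 ≤ xm := hxm01.1
  have hx1 : xm < 1 := by
    rcases lt_or_eq_of_le hxm01.2 with h | h
    · exact h
    · exfalso; rw [h] at hg'; simp at hg'; linarith
  have hxm2 : xm ∈ Set.Icc (0:ℝ) 2 := ⟨hx0, by linarith⟩
  refine ⟨xm / a, ?_, ?_, ?_, ?_, ?_, ?_⟩
  case _ =>
    exact ⟨by positivity, by rw [div_lt_div_iff₀ ha ha]; nlinarith⟩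
  case _ =>
    have : xm / a * lam * C = xm := by field_simp; ring
    rw [this]; exact hg'
  case _ =>
    intro q hq hq2
    have hqa : q * lam * C < 1 := by
      have := hq.2
      calc q * lam * C = q * a := by ring
        _ < (1/a) * a := by exact mul_lt_mul_of_pos_right this ha
        _ = 1 := by field_simp
    have hqa0 : 0 ≤ q * lam * C := by
      have := hq.1; positivity
    have hinj := g_anti.injOn ⟨hqa0, by linarith⟩ hxm2
      (by show Real.exp (-(q * lam * C)) * (1 - q * lam * C) = Real.exp (-xm) * (1 - xm)
          rw [hq2, ← hg'])
    have : q * a = xm := by rw [← hinj]; ring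
    field_simp
    linarith [this]
  case _ =>
    constructor
    · positivity
    · rw [div_le_one ha]; linarith
  case _ =>
    intro p hp hne
    have hpm1 : xm / a ≤ 1 := by rw [div_le_one ha]; linarith
    have hfc : ∀ s : Set ℝ, ContinuousOn (fun p => p * Real.exp (-(p * a)) - ρ * p) s := by
      intro s; fun_prop
    have key : (fun p => p * Real.exp (-(p * a)) - ρ * p) p <
        (fun p => p * Real.exp (-(p * a)) - ρ * p) (xm / a) := by
      rcases lt_or_gt_of_ne hne with h | h
      · -- p < pm : strict mono on [0, pm]
        have hmono : StrictMonoOn (fun p => p * Real.exp (-(p * a)) - ρ * p)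
            (Set.Icc 0 (xm / a)) := by
          apply strictMonoOn_of_deriv_pos (convex_Icc _ _) (hfc _)
          intro y hy
          rw [interior_Icc] at hy
          rw [(f_hasDeriv a ρ y).deriv]
          have hya : y * a < xm := by
            have := hy.2
            calc y * a < (xm / a) * a := mul_lt_mul_of_pos_right this ha
              _ = xm := by field_simp
          have hgy : Real.exp (-xm) * (1 - xm) < Real.exp (-(y * a)) * (1 - y * a) :=
            g_anti ⟨mul_nonneg (le_of_lt hy.1) ha.le, by nlinarith⟩ hxm2 hya
          rw [hg'] at hgy
          linarith
        exact hmono ⟨hp.1, h.le⟩ ⟨by positivity, le_refl _⟩ h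
      · -- p > pm : strict anti on [pm, 1]
        have hanti : StrictAntiOn (fun p => p * Real.exp (-(p * a)) - ρ * p)
            (Set.Icc (xm / a) 1) := by
          apply strictAntiOn_of_deriv_neg (convex_Icc _ _) (hfc _)
          intro y hy
          rw [interior_Icc] at hy
          rw [(f_hasDeriv a ρ y).deriv]
          have hya : xm < y * a := by
            have := hy.1
            calc xm = (xm / a) * a := by field_simp
              _ < y * a := mul_lt_mul_of_pos_right this ha
          have hy0 : 0 < y := lt_of_le_of_lt (div_nonneg hx0 ha.le) hy.1
          rcases le_or_gt (y * a) 2 with h2 | h2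
          · have hgy : Real.exp (-(y * a)) * (1 - y * a) < Real.exp (-xm) * (1 - xm) :=
              g_anti hxm2 ⟨mul_nonneg hy0.le ha.le, h2⟩ hya
            rw [hg'] at hgy; linarith
          · have : Real.exp (-(y * a)) * (1 - y * a) < 0 := by
              apply mul_neg_of_pos_of_neg (Real.exp_pos _)
              linarith
            linarith
        exact hanti ⟨le_refl _, hpm1⟩ ⟨h.le, hp.2⟩ h
    have hrw : ∀ q : ℝ, q * lam * C = q * a := fun q => by ring
    calc lam * p * Real.exp (-(p * lam * C)) - lam * ρ * p
        = lam * (p * Real.exp (-(p * a)) - ρ * p) := by rw [hrw]; ring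
      _ < lam * ((xm / a) * Real.exp (-((xm / a) * a)) - ρ * (xm / a)) :=
          mul_lt_mul_of_pos_left key hlam
      _ = lam * (xm / a) * Real.exp (-(xm / a * lam * C)) - lam * ρ * (xm / a) := by
          rw [hrw]; ring
  case _ =>
    have hpma : xm / a * lam * C = xm := by field_simp; ring
    rw [hpma]
    have hne : (1:ℝ) - xm ≠ 0 := by linarith
    rw [eq_div_iff hne]
    have hpm : (xm / a) * a = xm := by field_simp
    rw [← hg']
    linear_combination (-(lam * (xm / a) * Real.exp (-xm) * (1 - xm))) * hpma
end

section
/- Fix λ > 0 and C > 0 with λC ≥ 1. The function ρ ↦ max over p ∈ [0,1] of (λp exp(−pλC) − λρp) is strictly decreasing on the interval (0,1). -/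
lemma aux_cont (lam C ρ : ℝ) :
    Continuous (fun p : ℝ => lam * p * Real.exp (-(p * lam * C)) - lam * ρ * p) := by
  fun_prop

/-- For `λ > 0` and `C > 0` with `λC ≥ 1`, the optimal team
utility `ρ ↦ max_{p ∈ [0,1]} (λp exp(−pλC) − λρp)` is strictly decreasing
on `(0,1)`. -/
theorem stmt_16 (lam C : ℝ) (hlam : 0 < lam) (hC : 0 < C)
    (h1 : 1 ≤ lam * C) :
    StrictAntiOn
      (fun ρ => sSup ((fun p => lam * p * Real.exp (-(p * lam * C)) - lam * ρ * p) ''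
        Set.Icc (0:ℝ) 1))
      (Set.Ioo (0:ℝ) 1) := by
  intro ρ1 hρ1 ρ2 hρ2 hlt
  set g : ℝ → ℝ → ℝ := fun ρ p => lam * p * Real.exp (-(p * lam * C)) - lam * ρ * p with hg
  have hbdd : ∀ ρ : ℝ, BddAbove ((g ρ) '' Set.Icc (0:ℝ) 1) := fun ρ =>
    (isCompact_Icc.image (aux_cont lam C ρ)).bddAbove
  have hle : ∀ ρ : ℝ, ∀ p ∈ Set.Icc (0:ℝ) 1, g ρ p ≤ sSup ((g ρ) '' Set.Icc (0:ℝ) 1) :=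
    fun ρ p hp => le_csSup (hbdd ρ) ⟨p, hp, rfl⟩
  -- maximizer for ρ2
  obtain ⟨p2, hp2, hmax⟩ := isCompact_Icc.exists_isMaxOn (Set.nonempty_Icc.2 zero_le_one)
    (aux_cont lam C ρ2).continuousOn
  have hsup2 : sSup ((g ρ2) '' Set.Icc (0:ℝ) 1) = g ρ2 p2 := by
    apply IsGreatest.csSup_eq
    exact ⟨⟨p2, hp2, rfl⟩, by rintro _ ⟨q, hq, rfl⟩; exact hmax hq⟩
  show sSup ((g ρ2) '' Set.Icc (0:ℝ) 1) < sSup ((g ρ1) '' Set.Icc (0:ℝ) 1)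
  rw [hsup2]
  rcases eq_or_lt_of_le hp2.1 with h0 | hpos
  · -- p2 = 0, sup at ρ2 is 0; find small p with g ρ1 p > 0
    have hg0 : g ρ2 p2 = 0 := by simp [hg, ← h0]
    rw [hg0]
    have hρ1pos := hρ1.1
    have hρ1lt1 := hρ1.2
    set p : ℝ := min 1 ((-Real.log ρ1) / (2 * (lam * C))) with hp
    have hlogneg : Real.log ρ1 < 0 := Real.log_neg hρ1pos hρ1lt1
    have hlamC : 0 < lam * C := mul_pos hlam hC
    have hppos : 0 < p := lt_min one_pos (div_pos (by linarith) (by linarith))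
    have hpmem : p ∈ Set.Icc (0:ℝ) 1 := ⟨hppos.le, min_le_left _ _⟩
    have hkey : ρ1 < Real.exp (-(p * lam * C)) := by
      have h2 : p * (lam * C) < -Real.log ρ1 := by
        calc p * (lam * C) ≤ ((-Real.log ρ1) / (2 * (lam * C))) * (lam * C) := by
              apply mul_le_mul_of_nonneg_right (min_le_right _ _) hlamC.le
          _ = (-Real.log ρ1) / 2 := by field_simp
          _ < -Real.log ρ1 := by linarith
      have : Real.log ρ1 < -(p * lam * C) := by
        nlinarith [h2]
      calc ρ1 = Real.exp (Real.log ρ1) := (Real.exp_log hρ1pos).symm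
        _ < Real.exp (-(p * lam * C)) := Real.exp_lt_exp.2 this
    have hgpos : 0 < g ρ1 p := by
      have : lam * ρ1 * p < lam * p * Real.exp (-(p * lam * C)) := by
        have := mul_lt_mul_of_pos_left hkey (mul_pos hlam hppos)
        calc lam * ρ1 * p = (lam * p) * ρ1 := by ring
          _ < lam * p * Real.exp (-(p * lam * C)) := this
      simp only [hg]; linarith
    exact lt_of_lt_of_le hgpos (hle ρ1 p hpmem)
  · -- p2 > 0
    have : g ρ2 p2 < g ρ1 p2 := by
      simp only [hg]
      have : lam * ρ1 * p2 < lam * ρ2 * p2 := by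
        apply mul_lt_mul_of_pos_right _ hpos
        exact mul_lt_mul_of_pos_left hlt hlam
      linarith
    exact lt_of_lt_of_le this (hle ρ1 p2 hp2)
end

section
/- Fix λ > 0 and C > 0 with λC ≥ 1, and let 0 < ρ < exp(−λC). Let p_m ∈ [0, 1/(λC)) be the unique solution of exp(−p_mλC)(1 − p_mλC) = ρ. Then the price of anarchy of the goodput-based game, defined as the ratio of the maximal team utility max_{p∈[0,1]}(λp exp(−pλC) − λρp) to the equilibrium spatial utility λ(exp(−λC) − ρ), equals λCρ p_m² / ((1 − p_mλC)(exp(−λC) − ρ)). Moreover, for ρ ≥ exp(−λC) the utility of each node at the symmetric Nash equilibrium is 0 (so the price of anarchy is infinite). -/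
/-- Key pointwise inequality: for `0 ≤ xm < 1` and `x ≥ 0`,
`x e^{-x} ≤ e^{-xm} (xm² + x(1-xm))`. -/
lemma key_ineq (x xm : ℝ) (hx : 0 ≤ x) (hxm0 : 0 ≤ xm) (hxm1 : xm < 1) :
    x * Real.exp (-x) ≤ Real.exp (-xm) * (xm ^ 2 + x * (1 - xm)) := by
  have hu : Real.exp (-x) = Real.exp (-xm) * Real.exp (xm - x) := by
    rw [← Real.exp_add]; ring_nf
  set u := Real.exp (xm - x) with hudef
  have hupos : 0 < u := Real.exp_pos _
  have h1 : 1 + (x - xm) ≤ Real.exp (x - xm) := by linarith [Real.add_one_le_exp (x - xm)]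
  have h2 : u * Real.exp (x - xm) = 1 := by
    rw [hudef, ← Real.exp_add]; ring_nf; exact Real.exp_zero
  have h3 : u * (1 + (x - xm)) ≤ 1 := by
    calc u * (1 + (x - xm)) ≤ u * Real.exp (x - xm) :=
          mul_le_mul_of_nonneg_left h1 hupos.le
      _ = 1 := h2
  have hpos : 0 < 1 + (x - xm) := by linarith
  have hgoal : x * u ≤ xm ^ 2 + x * (1 - xm) := by
    have h4 : x * u * (1 + (x - xm)) ≤ x := by
      calc x * u * (1 + (x - xm)) = x * (u * (1 + (x - xm))) := by ring
        _ ≤ x * 1 := mul_le_mul_of_nonneg_left h3 hx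
        _ = x := mul_one x
    have h5 : x ≤ (xm ^ 2 + x * (1 - xm)) * (1 + (x - xm)) := by
      nlinarith [mul_nonneg (sq_nonneg (x - xm)) (by linarith : (0:ℝ) ≤ 1 - xm)]
    have := le_of_mul_le_mul_right (h4.trans h5) hpos
    linarith [this]
  have hE : 0 < Real.exp (-xm) := Real.exp_pos _
  calc x * Real.exp (-x) = Real.exp (-xm) * (x * u) := by rw [hu]; ring
    _ ≤ Real.exp (-xm) * (xm ^ 2 + x * (1 - xm)) :=
        mul_le_mul_of_nonneg_left hgoal hE.le

/-- For `λC ≥ 1` and `0 < ρ < exp(−λC)`, with `p_m` the unique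
solution in `[0, 1/(λC))` of `exp(−p_mλC)(1 − p_mλC) = ρ`, the price of
anarchy of the goodput-based game — the ratio of the maximal team utility
`max_{p∈[0,1]} (λp exp(−pλC) − λρp)` to the equilibrium spatial utility
`λ(exp(−λC) − ρ)` — equals `λCρ p_m²/((1 − p_mλC)(exp(−λC) − ρ))`.
Moreover, for any price `ρ′ ≥ exp(−λC)`, the utility of each node at any
symmetric Nash equilibrium is `0`. -/
theorem stmt_17 (lam C ρ pm : ℝ) (hlam : 0 < lam) (hC : 0 < C)
    (h1 : 1 ≤ lam * C) (hρ0 : 0 < ρ) (hρ1 : ρ < Real.exp (-(lam * C)))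
    (hpm : pm ∈ Set.Ico (0:ℝ) (1 / (lam * C)))
    (hpmeq : Real.exp (-(pm * lam * C)) * (1 - pm * lam * C) = ρ) :
    sSup ((fun p => lam * p * Real.exp (-(p * lam * C)) - lam * ρ * p) ''
          Set.Icc (0:ℝ) 1) /
        (lam * (Real.exp (-(lam * C)) - ρ)) =
      lam * C * ρ * pm ^ 2 /
        ((1 - pm * lam * C) * (Real.exp (-(lam * C)) - ρ)) ∧
    (∀ ρ' : ℝ, Real.exp (-(lam * C)) ≤ ρ' →
      ∀ p ∈ Set.Icc (0:ℝ) 1,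
        (∀ q ∈ Set.Icc (0:ℝ) 1,
          q * (Real.exp (-(p * lam * C)) - ρ') ≤
            p * (Real.exp (-(p * lam * C)) - ρ')) →
        p * (Real.exp (-(p * lam * C)) - ρ') = 0) := by
  have ha : 0 < lam * C := lt_of_lt_of_le one_pos h1
  obtain ⟨hpm0, hpm1⟩ := hpm
  have hxm1 : pm * lam * C < 1 := by
    have := (lt_div_iff₀ ha).mp hpm1
    linarith [this]
  have hxm0 : 0 ≤ pm * lam * C := by positivity
  have hpmle1 : pm ≤ 1 := by
    have h1a : 1 / (lam * C) ≤ 1 := by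
      rw [div_le_one ha]; exact h1
    linarith [hpm1]
  constructor
  · -- first conjunct
    have hgr : IsGreatest
        ((fun p => lam * p * Real.exp (-(p * lam * C)) - lam * ρ * p) ''
          Set.Icc (0:ℝ) 1)
        (lam * pm * Real.exp (-(pm * lam * C)) - lam * ρ * pm) := by
      constructor
      · exact ⟨pm, ⟨hpm0, hpmle1⟩, rfl⟩
      · rintro y ⟨p, ⟨hp0, hp1⟩, rfl⟩
        simp only
        -- reduce to key inequality with x = p lam C, xm = pm lam C
        have hx0 : 0 ≤ p * lam * C := by positivity
        have hk := key_ineq (p * lam * C) (pm * lam * C) hx0 hxm0 hxm1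
        -- substitute ρ
        rw [← hpmeq]
        nlinarith [hk, Real.exp_pos (-(pm * lam * C)), Real.exp_pos (-(p * lam * C)),
          mul_pos hlam hC, hlam]
    rw [hgr.csSup_eq]
    have hE : ρ < Real.exp (-(lam * C)) := hρ1
    have hd1 : Real.exp (-(lam * C)) - ρ ≠ 0 := by linarith
    have hd2 : (1 : ℝ) - pm * lam * C ≠ 0 := by linarith
    have hlam' : lam ≠ 0 := ne_of_gt hlam
    rw [div_eq_div_iff (by positivity) (mul_ne_zero hd2 hd1)]
    linear_combination (lam * pm * (Real.exp (-(lam * C)) - ρ)) * hpmeq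
  · -- second conjunct
    intro ρ' hρ' p ⟨hp0, hp1⟩ hNash
    set E := Real.exp (-(p * lam * C)) with hEdef
    rcases le_or_gt (E - ρ') 0 with hle | hgt
    · have h0 := hNash 0 ⟨le_refl 0, zero_le_one⟩
      simp at h0
      have : p * (E - ρ') ≤ 0 := mul_nonpos_of_nonneg_of_nonpos hp0 hle
      linarith
    · exfalso
      have h1' := hNash 1 ⟨zero_le_one, le_refl 1⟩
      rw [one_mul] at h1'
      have hp1' : 1 ≤ p := by
        by_contra hcon
        push_neg at hcon
        nlinarith [h1', hgt]
      have hpeq : p = 1 := le_antisymm hp1 hp1'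
      rw [hpeq] at hEdef
      have : E ≤ ρ' := by
        rw [hEdef, one_mul]; exact hρ'
      linarith
end

section
/- Fix λ > 0, C̄ > 0, ρ > 0 and write C = 2C̄. Suppose p_m ∈ (0, 1/(λC)) satisfies exp(p_mλC)(1 − p_mλC) = ρ p_m², and p* ∈ (0,1] satisfies p*√ρ = exp(p*λC̄). Then (exp(p_mλC)/p_m + ρp_m) / (exp(p*λC)/p* + ρp*) = p_m(2 − p_mλC) / (2p*(1 − p_mλC)); in particular this ratio is at least p_m/p*. -/
/-- With `C = 2C̄`, if `p_m ∈ (0, 1/(λC))` satisfies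
`exp(p_mλC)(1 − p_mλC) = ρ p_m²` and `p* ∈ (0,1]` satisfies
`p*√ρ = exp(p*λC̄)`, then
`(exp(p_mλC)/p_m + ρp_m)/(exp(p*λC)/p* + ρp*) =
  p_m(2 − p_mλC)/(2p*(1 − p_mλC))`, and this ratio is at least `p_m/p*`. -/
theorem stmt_18 (lam Cb ρ pm pstar : ℝ) (hlam : 0 < lam) (hCb : 0 < Cb)
    (hρ : 0 < ρ)
    (hpm : pm ∈ Set.Ioo (0:ℝ) (1 / (lam * (2 * Cb))))
    (hpmeq : Real.exp (pm * lam * (2 * Cb)) * (1 - pm * lam * (2 * Cb)) =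
      ρ * pm ^ 2)
    (hps : pstar ∈ Set.Ioc (0:ℝ) 1)
    (hfix : pstar * Real.sqrt ρ = Real.exp (pstar * lam * Cb)) :
    (Real.exp (pm * lam * (2 * Cb)) / pm + ρ * pm) /
        (Real.exp (pstar * lam * (2 * Cb)) / pstar + ρ * pstar) =
      pm * (2 - pm * lam * (2 * Cb)) /
        (2 * pstar * (1 - pm * lam * (2 * Cb))) ∧
    pm / pstar ≤
      (Real.exp (pm * lam * (2 * Cb)) / pm + ρ * pm) /
        (Real.exp (pstar * lam * (2 * Cb)) / pstar + ρ * pstar) := by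
  obtain ⟨hpm0, hpm1⟩ := hpm
  obtain ⟨hps0, hps1⟩ := hps
  have hlC : 0 < lam * (2 * Cb) := by positivity
  have hx0 : 0 < pm * lam * (2 * Cb) := by
    have := mul_pos hpm0 hlC; nlinarith
  have hx1 : pm * lam * (2 * Cb) < 1 := by
    have := (lt_div_iff₀ hlC).mp hpm1
    nlinarith
  set x := pm * lam * (2 * Cb) with hxdef
  have h1x : 0 < 1 - x := by linarith
  -- exp(pm λ C) = ρ pm² / (1 - x)
  have hem : Real.exp x = ρ * pm ^ 2 / (1 - x) := by
    field_simp
    linarith [hpmeq]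
  -- exp(pstar λ C) = ρ pstar²
  have hes : Real.exp (pstar * lam * (2 * Cb)) = ρ * pstar ^ 2 := by
    have h2 : pstar * lam * (2 * Cb) = pstar * lam * Cb + pstar * lam * Cb := by ring
    rw [h2, Real.exp_add, ← hfix]
    have : Real.sqrt ρ * Real.sqrt ρ = ρ := Real.mul_self_sqrt hρ.le
    nlinarith
  have hden : Real.exp (pstar * lam * (2 * Cb)) / pstar + ρ * pstar = 2 * ρ * pstar := by
    rw [hes]; field_simp; ring
  have hratio : (Real.exp x / pm + ρ * pm) /
      (Real.exp (pstar * lam * (2 * Cb)) / pstar + ρ * pstar) =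
      pm * (2 - x) / (2 * pstar * (1 - x)) := by
    rw [hden, hem]
    rw [div_eq_div_iff (by positivity) (by positivity)]
    field_simp
    ring
  refine ⟨hratio, ?_⟩
  rw [hratio]
  rw [div_le_div_iff₀ hps0 (by positivity)]
  nlinarith [mul_pos hpm0 hps0]
end
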